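/- Assume R_{tsuv} ≡ 0 on U. Then there exists a family of matrix-valued functions P^{<w₁,…,w_k>}_{ts} : U → ℝ (indexed by w₁,…,w_k ∈ ℕ and 1 ≤ t, s ≤ n), analytic on U, such that P^{<0,…,0>}_{ts} = δ_{ts} and, for every 1 ≤ u ≤ k and every multi-index (w₁,…,w_k), P^{<w₁,…,w_u+1,…,w_k>}_{ts} = ∂P^{<w₁,…,w_k>}_{ts}/∂x_u + Σ_{p=1}^n f_{tpu} P^{<w₁,…,w_k>}_{ps} on U. -/

import Mathlib

namespace Stmt3Aux

variable {n k : ℕ}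

noncomputable def Lop (f : Fin n → Fin n → Fin k → (Fin k → ℝ) → ℝ) (u : Fin k)
    (g : Fin n → Fin n → (Fin k → ℝ) → ℝ) : Fin n → Fin n → (Fin k → ℝ) → ℝ :=
  fun t s x => fderiv ℝ (g t s) x (Pi.single u 1) + ∑ p, f t p u x * g p s x

noncomputable def Qop (f : Fin n → Fin n → Fin k → (Fin k → ℝ) → ℝ) :
    List (Fin k) → Fin n → Fin n → (Fin k → ℝ) → ℝ
  | [] => fun t s _ => if t = s then (1 : ℝ) else 0
  | u :: l => Lop f u (Qop f l)

section

variable {U : Set (Fin k → ℝ)} {f : Fin n → Fin n → Fin k → (Fin k → ℝ) → ℝ}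
  {g : Fin n → Fin n → (Fin k → ℝ) → ℝ}

lemma Lop_analytic (hf : ∀ r s u, AnalyticOnNhd ℝ (f r s u) U)
    (hg : ∀ t s, AnalyticOnNhd ℝ (g t s) U) (u : Fin k) (t s : Fin n) :
    AnalyticOnNhd ℝ (Lop f u g t s) U := by
  apply AnalyticOnNhd.add
  · exact (ContinuousLinearMap.apply ℝ ℝ (Pi.single u 1)).comp_analyticOnNhd (hg t s).fderiv
  · exact Finset.analyticOnNhd_fun_sum _ fun p _ => (hf t p u).mul (hg p s)

lemma fderiv_Lop (hf : ∀ r s u, AnalyticOnNhd ℝ (f r s u) U)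
    (hg : ∀ t s, AnalyticOnNhd ℝ (g t s) U) {x : Fin k → ℝ} (hx : x ∈ U)
    (u v : Fin k) (t s : Fin n) :
    fderiv ℝ (Lop f v g t s) x (Pi.single u 1)
      = fderiv ℝ (fderiv ℝ (g t s)) x (Pi.single u 1) (Pi.single v 1)
        + ∑ p, (fderiv ℝ (f t p v) x (Pi.single u 1) * g p s x
            + f t p v x * fderiv ℝ (g p s) x (Pi.single u 1)) := by
  have hg' : HasFDerivAt (fderiv ℝ (g t s)) (fderiv ℝ (fderiv ℝ (g t s)) x) x :=
    (((hg t s).fderiv x hx).differentiableAt).hasFDerivAt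
  have h1 : HasFDerivAt (fun y => fderiv ℝ (g t s) y (Pi.single v 1))
      ((fderiv ℝ (g t s) x).comp 0
        + (fderiv ℝ (fderiv ℝ (g t s)) x).flip (Pi.single v 1)) x :=
    hg'.clm_apply (hasFDerivAt_const _ _)
  have h2 : ∀ p : Fin n, HasFDerivAt (fun y => f t p v y * g p s y)
      (f t p v x • fderiv ℝ (g p s) x + g p s x • fderiv ℝ (f t p v) x) x :=
    fun p => ((hf t p v x hx).differentiableAt.hasFDerivAt).mul
      ((hg p s x hx).differentiableAt.hasFDerivAt)
  have h3 : HasFDerivAt (Lop f v g t s)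
      (((fderiv ℝ (g t s) x).comp 0
          + (fderiv ℝ (fderiv ℝ (g t s)) x).flip (Pi.single v 1))
        + ∑ p, (f t p v x • fderiv ℝ (g p s) x + g p s x • fderiv ℝ (f t p v) x)) x :=
    h1.add (HasFDerivAt.fun_sum fun p _ => h2 p)
  rw [h3.fderiv]
  simp only [ContinuousLinearMap.add_apply, ContinuousLinearMap.comp_zero,
    ContinuousLinearMap.zero_apply, ContinuousLinearMap.flip_apply,
    ContinuousLinearMap.coe_sum', Finset.sum_apply, ContinuousLinearMap.coe_smul',
    Pi.smul_apply, smul_eq_mul, zero_add]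
  congr 1
  exact Finset.sum_congr rfl fun p _ => by ring

lemma Lop_comm (hf : ∀ r s u, AnalyticOnNhd ℝ (f r s u) U)
    (hR : ∀ x ∈ U, ∀ (t s : Fin n) (u v : Fin k),
      fderiv ℝ (f t s v) x (Pi.single u 1) - fderiv ℝ (f t s u) x (Pi.single v 1)
        + ∑ p, f t p u x * f p s v x - ∑ p, f t p v x * f p s u x = 0)
    (hg : ∀ t s, AnalyticOnNhd ℝ (g t s) U) {x : Fin k → ℝ} (hx : x ∈ U)
    (u v : Fin k) (t s : Fin n) :
    Lop f u (Lop f v g) t s x = Lop f v (Lop f u g) t s x := by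
  have hsym : fderiv ℝ (fderiv ℝ (g t s)) x (Pi.single u 1) (Pi.single v 1)
      = fderiv ℝ (fderiv ℝ (g t s)) x (Pi.single v 1) (Pi.single u 1) :=
    (((hg t s x hx)).contDiffAt (n := 2)).isSymmSndFDerivAt (by simp) _ _
  have e1 := fderiv_Lop hf hg hx u v t s
  have e2 := fderiv_Lop hf hg hx v u t s
  have hRq : ∀ p : Fin n, fderiv ℝ (f t p v) x (Pi.single u 1)
      = fderiv ℝ (f t p u) x (Pi.single v 1)
        - ∑ r, f t r u x * f r p v x + ∑ r, f t r v x * f r p u x := by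
    intro p
    have := hR x hx t p u v
    linarith
  show fderiv ℝ (Lop f v g t s) x (Pi.single u 1) + ∑ p, f t p u x * Lop f v g p s x
      = fderiv ℝ (Lop f u g t s) x (Pi.single v 1) + ∑ p, f t p v x * Lop f u g p s x
  rw [e1, e2, hsym]
  simp only [Lop, hRq]
  have swap1 : ∑ p : Fin n, ∑ r : Fin n, f t r u x * f r p v x * g p s x
      = ∑ p : Fin n, ∑ r : Fin n, f t p u x * (f p r v x * g r s x) := by
    rw [Finset.sum_comm]
    exact Finset.sum_congr rfl fun p _ => Finset.sum_congr rfl fun r _ => by ring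
  have swap2 : ∑ p : Fin n, ∑ r : Fin n, f t r v x * f r p u x * g p s x
      = ∑ p : Fin n, ∑ r : Fin n, f t p v x * (f p r u x * g r s x) := by
    rw [Finset.sum_comm]
    exact Finset.sum_congr rfl fun p _ => Finset.sum_congr rfl fun r _ => by ring
  simp only [sub_mul, add_mul, mul_add, Finset.sum_add_distrib, Finset.sum_sub_distrib,
    Finset.mul_sum, Finset.sum_mul]
  rw [swap1, swap2]
  ring

lemma Lop_congr (hUopen : IsOpen U) {g₁ g₂ : Fin n → Fin n → (Fin k → ℝ) → ℝ}
    (h : ∀ t s, Set.EqOn (g₁ t s) (g₂ t s) U) (u : Fin k) (t s : Fin n) :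
    Set.EqOn (Lop f u g₁ t s) (Lop f u g₂ t s) U := fun x hx => by
  have hfd : fderiv ℝ (g₁ t s) x = fderiv ℝ (g₂ t s) x :=
    Filter.EventuallyEq.fderiv_eq (Filter.eventuallyEq_of_mem (hUopen.mem_nhds hx) (h t s))
  simp only [Lop, hfd]
  congr 1
  exact Finset.sum_congr rfl fun p _ => by rw [h p s hx]

lemma Qop_analytic (hf : ∀ r s u, AnalyticOnNhd ℝ (f r s u) U) :
    ∀ (l : List (Fin k)) (t s : Fin n), AnalyticOnNhd ℝ (Qop f l t s) U
  | [], _, _ => analyticOnNhd_const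
  | u :: l, t, s => Lop_analytic hf (fun t s => Qop_analytic hf l t s) u t s

lemma Qop_perm (hUopen : IsOpen U) (hf : ∀ r s u, AnalyticOnNhd ℝ (f r s u) U)
    (hR : ∀ x ∈ U, ∀ (t s : Fin n) (u v : Fin k),
      fderiv ℝ (f t s v) x (Pi.single u 1) - fderiv ℝ (f t s u) x (Pi.single v 1)
        + ∑ p, f t p u x * f p s v x - ∑ p, f t p v x * f p s u x = 0)
    {l₁ l₂ : List (Fin k)} (h : l₁.Perm l₂) :
    ∀ t s, Set.EqOn (Qop f l₁ t s) (Qop f l₂ t s) U := by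
  induction h with
  | nil => intro t s x hx; rfl
  | cons u h ih => exact Lop_congr hUopen ih u
  | swap u v l =>
      intro t s x hx
      exact Lop_comm hf hR (Qop_analytic hf l) hx v u t s
  | trans h₁ h₂ ih₁ ih₂ => intro t s x hx; rw [ih₁ t s hx, ih₂ t s hx]

def wlist (w : Fin k → ℕ) : List (Fin k) :=
  (List.finRange k).flatMap fun u => List.replicate (w u) u

lemma count_aux (w : Fin k → ℕ) (v : Fin k) : ∀ l : List (Fin k),
    (l.flatMap fun u => List.replicate (w u) u).count v
      = (l.map fun u => if u = v then w u else 0).sum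
  | [] => rfl
  | u :: l => by
      simp [List.count_append, List.count_replicate, count_aux w v l]

lemma count_wlist (w : Fin k → ℕ) (v : Fin k) : (wlist w).count v = w v := by
  rw [wlist, count_aux, ← List.ofFn_eq_map, List.sum_ofFn]
  simp

lemma wlist_perm (w : Fin k → ℕ) (u : Fin k) :
    (wlist (w + Pi.single u 1)).Perm (u :: wlist w) := by
  rw [List.perm_iff_count]
  intro v
  rw [count_wlist, List.count_cons, count_wlist]
  rcases eq_or_ne v u with h | h
  · simp [h, Pi.single_apply]
  · simp [h, Pi.single_apply, Ne.symm h]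

end

end Stmt3Aux

/-- If the curvature functions `R_{tsuv}` vanish identically on `U`, then there exists a family
of functions `P^{<w₁,…,w_k>}_{ts}`, analytic on `U`, with `P^{<0,…,0>}_{ts} = δ_{ts}` and
`P^{<w₁,…,w_u+1,…,w_k>}_{ts} = ∂P^{<w>}_{ts}/∂x_u + ∑_p f_{tpu} P^{<w>}_{ps}` on `U`. -/
theorem stmt_3 (n k : ℕ) (hn : 1 ≤ n) (hk : 1 ≤ k)
    (U : Set (Fin k → ℝ)) (hUopen : IsOpen U) (hU0 : (0 : Fin k → ℝ) ∈ U)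
    (f : Fin n → Fin n → Fin k → (Fin k → ℝ) → ℝ)
    (hf : ∀ r s u, AnalyticOnNhd ℝ (f r s u) U)
    (hR : ∀ x ∈ U, ∀ (t s : Fin n) (u v : Fin k),
      fderiv ℝ (f t s v) x (Pi.single u 1) - fderiv ℝ (f t s u) x (Pi.single v 1)
        + ∑ p, f t p u x * f p s v x - ∑ p, f t p v x * f p s u x = 0) :
    ∃ P : (Fin k → ℕ) → Fin n → Fin n → (Fin k → ℝ) → ℝ,
      (∀ w t s, AnalyticOnNhd ℝ (P w t s) U) ∧
      (∀ t s, ∀ x ∈ U, P 0 t s x = if t = s then (1 : ℝ) else 0) ∧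
      (∀ (w : Fin k → ℕ) (u : Fin k) (t s : Fin n), ∀ x ∈ U,
        P (w + Pi.single u 1) t s x
          = fderiv ℝ (P w t s) x (Pi.single u 1) + ∑ p, f t p u x * P w p s x) := by
  refine ⟨fun w => Stmt3Aux.Qop f (Stmt3Aux.wlist w), ?_, ?_, ?_⟩
  · intro w t s
    exact Stmt3Aux.Qop_analytic hf _ t s
  · intro t s x hx
    simp only []
    have h0 : Stmt3Aux.wlist (0 : Fin k → ℕ) = [] := by
      simp [Stmt3Aux.wlist]
    rw [h0]
    rfl
  · intro w u t s x hx
    simp only []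
    have hperm := Stmt3Aux.wlist_perm w u
    rw [Stmt3Aux.Qop_perm hUopen hf hR hperm t s hx]
    rfl
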